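/- Let n ≥ 2, let β be a real number, and set U = aI + bJ with a = (iβ+n)/(iβ−n) and b = 2/(n−iβ). Then for vectors Ψ = (ψ₁,…,ψₙ) and Ψ′ = (ψ′₁,…,ψ′ₙ) in ℂⁿ, the condition (U−I)Ψ + i(U+I)Ψ′ = 0 holds if and only if ∑_{j=1}^n ψ′ⱼ = 0 and ψⱼ − ψₖ = (β/n)·(ψ′ⱼ − ψ′ₖ) for all j, k ∈ {1,…,n}. -/

import Mathlib

open Matrix BigOperators

theorem stmt_9 (n : ℕ) (hn : 2 ≤ n) (β : ℝ) (a b : ℂ)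
    (ha : a = (Complex.I * β + n) / (Complex.I * β - n))
    (hb : b = 2 / ((n : ℂ) - Complex.I * β))
    (U : Matrix (Fin n) (Fin n) ℂ)
    (hU : U = a • (1 : Matrix (Fin n) (Fin n) ℂ)
      + b • (Matrix.of fun _ _ => (1 : ℂ)))
    (Ψ Ψ' : Fin n → ℂ) :
    (U - 1).mulVec Ψ + Complex.I • (U + 1).mulVec Ψ' = 0 ↔
    ((∑ j, Ψ' j) = 0
      ∧ ∀ j k : Fin n, Ψ j - Ψ k = ((β : ℂ) / n) * (Ψ' j - Ψ' k)) := by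
  have hnn : n ≠ 0 := by omega
  have hn0 : (n : ℂ) ≠ 0 := Nat.cast_ne_zero.mpr hnn
  have hd : Complex.I * (β : ℂ) - (n : ℂ) ≠ 0 := by
    intro h
    have h' := congrArg Complex.re h
    simp [Complex.ext_iff] at h'
    exact hnn (by exact_mod_cast h')
  have hβn : (β : ℂ) + (n : ℂ) * Complex.I ≠ 0 := by
    intro h
    have h' := congrArg Complex.im h
    simp [Complex.ext_iff] at h'
    exact hnn (by exact_mod_cast h')
  set S := ∑ j, Ψ j with hS
  set S' := ∑ j, Ψ' j with hS'
  have key : ∀ j, ((U - 1).mulVec Ψ + Complex.I • (U + 1).mulVec Ψ') j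
      = (2 / (Complex.I * (β : ℂ) - (n : ℂ))) *
        ((n : ℂ) * Ψ j - S - (β : ℂ) * Ψ' j - Complex.I * S') := by
    intro j
    have hmul : ∀ v : Fin n → ℂ, U.mulVec v j = a * v j + b * ∑ k, v k := by
      intro v
      simp [hU, Matrix.mulVec, dotProduct, Matrix.add_apply,
        Matrix.smul_apply, Matrix.one_apply, add_mul, ite_mul,
        Finset.sum_add_distrib, Finset.mul_sum]
    have h1 : (U - 1).mulVec Ψ j = (a - 1) * Ψ j + b * S := by
      have := hmul Ψ
      simp [Matrix.sub_mulVec, Matrix.one_mulVec, this, hS]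
      ring
    have h2 : (U + 1).mulVec Ψ' j = (a + 1) * Ψ' j + b * S' := by
      have := hmul Ψ'
      simp [Matrix.add_mulVec, Matrix.one_mulVec, this, hS']
      ring
    have hIβn : (n : ℂ) - Complex.I * (β : ℂ) ≠ 0 := by
      intro h; apply hd; linear_combination -h
    simp only [Pi.add_apply, Pi.smul_apply, h1, h2, smul_eq_mul, ha, hb]
    field_simp
    ring_nf
    linear_combination (4*(n:ℂ)*(β:ℂ)^2*Ψ' j*Complex.I - 2*(β:ℂ)*Ψ' j*((n:ℂ)^2 + (β:ℂ)^2*Complex.I^2) + Ψ' j*((-4*(β:ℂ)^2*(n:ℂ) - 2*(β:ℂ)^2)*Complex.I + 2*(β:ℂ)*(n:ℂ) + 2*(β:ℂ)*(n:ℂ)^2 + 2*(β:ℂ)^3*Complex.I^2)) * Complex.I_sq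
  have keyiff : ((U - 1).mulVec Ψ + Complex.I • (U + 1).mulVec Ψ' = 0) ↔
      ∀ j, (n : ℂ) * Ψ j - S - (β : ℂ) * Ψ' j - Complex.I * S' = 0 := by
    rw [funext_iff]
    refine forall_congr' fun j => ?_
    rw [key j, Pi.zero_apply, mul_eq_zero]
    simp [div_eq_zero_iff, hd]
  rw [keyiff]
  constructor
  · intro h
    have hsum : ∑ j, ((n : ℂ) * Ψ j - S - (β : ℂ) * Ψ' j - Complex.I * S') = 0 := by
      simp [h]
    have hexp : ∑ j, ((n : ℂ) * Ψ j - S - (β : ℂ) * Ψ' j - Complex.I * S')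
        = -((β : ℂ) + (n : ℂ) * Complex.I) * S' := by
      simp [Finset.sum_sub_distrib, ← Finset.mul_sum, Finset.sum_const,
        Finset.card_univ, ← hS, ← hS']
      ring
    have hS'0 : S' = 0 := by
      have := hexp ▸ hsum
      rcases mul_eq_zero.mp this with h' | h'
      · exact absurd (neg_eq_zero.mp h') hβn
      · exact h'
    refine ⟨hS'0, fun j k => ?_⟩
    have hj := h j
    have hk := h k
    field_simp
    linear_combination hj - hk
  · rintro ⟨hS'0, hdiff⟩ j
    rw [hS'0]
    have h1 : (n : ℂ) * Ψ j - S = ∑ k, (Ψ j - Ψ k) := by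
      simp [Finset.sum_sub_distrib, Finset.sum_const, Finset.card_univ, ← hS]
    have h2 : ∑ k, (Ψ j - Ψ k) = (β : ℂ) * Ψ' j := by
      calc ∑ k, (Ψ j - Ψ k) = ∑ k, ((β : ℂ) / n) * (Ψ' j - Ψ' k) := by
            exact Finset.sum_congr rfl fun k _ => hdiff j k
        _ = ((β : ℂ) / n) * ((n : ℂ) * Ψ' j - S') := by
            rw [← Finset.mul_sum]
            congr 1
            simp [Finset.sum_sub_distrib, Finset.sum_const, Finset.card_univ, ← hS']
        _ = (β : ℂ) * Ψ' j := by rw [hS'0]; field_simp; ring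
    rw [h1, h2]
    ring
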